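/- Let U ⊆ (0,∞) × ℝ be open and connected, and let ψ, γ : U → ℝ be continuously differentiable with γ − 2ψ constant on U and ∂_zψ ≡ 0 on U. If the vacuum field equation ρ·((∂_ρψ)² − (∂_zψ)²) = ∂_ργ holds on U, then either ψ is constant on U, or there is a constant d₁ with ψ(ρ,z) = 2 ln ρ + d₁ on U (in which case γ(ρ,z) = 4 ln ρ + d₂ for a constant d₂). -/

import Mathlib

open Real

/-- Partial derivative with respect to the first variable. -/
noncomputable def pd1 (f : ℝ → ℝ → ℝ) (x y : ℝ) : ℝ := deriv (fun x' => f x' y) x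

/-- Partial derivative with respect to the second variable. -/
noncomputable def pd2 (f : ℝ → ℝ → ℝ) (x y : ℝ) : ℝ := deriv (fun y' => f x y') y

/-- slice derivative in first coordinate -/
lemma aux_slice1 (F : ℝ × ℝ → ℝ) (p : ℝ × ℝ) (hF : DifferentiableAt ℝ F p) :
    HasDerivAt (fun x => F (x, p.2)) (fderiv ℝ F p (1, 0)) p.1 := by
  have hF' : HasFDerivAt F (fderiv ℝ F p) ((fun x : ℝ => (x, p.2)) p.1) := by
    simp only [Prod.mk.eta]; exact hF.hasFDerivAt
  have h1 : HasDerivAt (fun x : ℝ => ((x, p.2) : ℝ × ℝ)) ((1 : ℝ), (0 : ℝ)) p.1 :=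
    (hasDerivAt_id p.1).prodMk (hasDerivAt_const p.1 p.2)
  exact hF'.comp_hasDerivAt p.1 h1

lemma aux_slice2 (F : ℝ × ℝ → ℝ) (p : ℝ × ℝ) (hF : DifferentiableAt ℝ F p) :
    HasDerivAt (fun y => F (p.1, y)) (fderiv ℝ F p (0, 1)) p.2 := by
  have hF' : HasFDerivAt F (fderiv ℝ F p) ((fun y : ℝ => (p.1, y)) p.2) := by
    simp only [Prod.mk.eta]; exact hF.hasFDerivAt
  have h1 : HasDerivAt (fun y : ℝ => ((p.1, y) : ℝ × ℝ)) ((0 : ℝ), (1 : ℝ)) p.2 :=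
    (hasDerivAt_const p.2 p.1).prodMk (hasDerivAt_id p.2)
  exact hF'.comp_hasDerivAt p.2 h1

lemma aux_fderiv_zero (F : ℝ × ℝ → ℝ) (p : ℝ × ℝ)
    (h1 : fderiv ℝ F p (1, 0) = 0) (h2 : fderiv ℝ F p (0, 1) = 0) :
    fderiv ℝ F p = 0 := by
  apply ContinuousLinearMap.ext
  intro v
  have hv : v = v.1 • ((1 : ℝ), (0 : ℝ)) + v.2 • ((0 : ℝ), (1 : ℝ)) := by
    simp [Prod.ext_iff]
  rw [hv, map_add, map_smul, map_smul, h1, h2]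
  simp

lemma aux_const_on (U : Set (ℝ × ℝ)) (hU : IsOpen U) (hc : IsPreconnected U)
    (f : ℝ × ℝ → ℝ) (hf : ∀ p ∈ U, DifferentiableAt ℝ f p)
    (hd : ∀ p ∈ U, fderiv ℝ f p = 0) :
    ∀ p ∈ U, ∀ q ∈ U, f p = f q := by
  have hloc : ∀ q ∈ U, ∀ᶠ r in nhds q, f r = f q := by
    intro q hq
    obtain ⟨ε, hε, hball⟩ := Metric.isOpen_iff.mp hU q hq
    have hco : ∀ r ∈ Metric.ball q ε, f r = f q := by
      intro r hr
      refine (convex_ball q ε).is_const_of_fderivWithin_eq_zero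
        (fun x hx => (hf x (hball hx)).differentiableWithinAt) ?_ hr
        (Metric.mem_ball_self hε)
      intro x hx
      rw [fderivWithin_of_isOpen Metric.isOpen_ball hx]
      exact hd x (hball hx)
    exact Filter.eventually_of_mem (Metric.ball_mem_nhds q hε) hco
  intro p hp q hq
  by_contra hne
  set A := {r : ℝ × ℝ | r ∈ U ∧ f r = f p} with hA
  set B := {r : ℝ × ℝ | r ∈ U ∧ f r ≠ f p} with hB
  have hAopen : IsOpen A := by
    rw [isOpen_iff_mem_nhds]
    intro r hr
    filter_upwards [hloc r hr.1, hU.mem_nhds hr.1] with s hs hsU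
    exact ⟨hsU, hs.trans hr.2⟩
  have hBopen : IsOpen B := by
    rw [isOpen_iff_mem_nhds]
    intro r hr
    filter_upwards [hloc r hr.1, hU.mem_nhds hr.1] with s hs hsU
    exact ⟨hsU, hs.trans_ne hr.2⟩
  obtain ⟨r, _, ⟨_, hr1⟩, ⟨_, hr2⟩⟩ := hc A B hAopen hBopen
    (fun s hs => by by_cases h : f s = f p
                    · exact Or.inl ⟨hs, h⟩
                    · exact Or.inr ⟨hs, h⟩)
    ⟨p, hp, hp, rfl⟩ ⟨q, hq, hq, fun h => hne h.symm⟩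
  exact hr2 hr1

/-- On an open connected `U ⊆ (0,∞) × ℝ`, if `ψ, γ` are `C¹`
with `γ − 2ψ` constant, `ψ_{,z} ≡ 0`, and the vacuum equation
`ρ(ψ_{,ρ}² − ψ_{,z}²) = γ_{,ρ}` holds on `U`, then either `ψ` is constant on
`U`, or `ψ = 2 ln ρ + d₁` and `γ = 4 ln ρ + d₂` on `U` for constants `d₁, d₂`. -/
theorem twist_free_vacuum_psi_classification
    (U : Set (ℝ × ℝ)) (hU : IsOpen U) (hconn : IsConnected U)
    (hUsub : ∀ p ∈ U, 0 < p.1)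
    (ψ γ : ℝ → ℝ → ℝ)
    (hψ : ContDiffOn ℝ 1 (fun q : ℝ × ℝ => ψ q.1 q.2) U)
    (hγ : ContDiffOn ℝ 1 (fun q : ℝ × ℝ => γ q.1 q.2) U)
    (hconst : ∃ c : ℝ, ∀ p ∈ U, γ p.1 p.2 - 2 * ψ p.1 p.2 = c)
    (hz : ∀ p ∈ U, pd2 ψ p.1 p.2 = 0)
    (hvac : ∀ p ∈ U, p.1 * ((pd1 ψ p.1 p.2) ^ 2 - (pd2 ψ p.1 p.2) ^ 2)
      = pd1 γ p.1 p.2) :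
    (∃ c : ℝ, ∀ p ∈ U, ψ p.1 p.2 = c) ∨
    (∃ d₁ d₂ : ℝ, ∀ p ∈ U, ψ p.1 p.2 = 2 * Real.log p.1 + d₁ ∧
      γ p.1 p.2 = 4 * Real.log p.1 + d₂) := by
  obtain ⟨c, hc⟩ := hconst
  obtain ⟨p₀, hp₀⟩ := hconn.nonempty
  set F : ℝ × ℝ → ℝ := fun q => ψ q.1 q.2 with hF
  have hFdiff : ∀ p ∈ U, DifferentiableAt ℝ F p := fun p hp =>
    (hψ.differentiableOn one_ne_zero).differentiableAt (hU.mem_nhds hp)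
  set g : ℝ × ℝ → ℝ := fun p => fderiv ℝ F p (1, 0) with hg
  have hs1 : ∀ p ∈ U, HasDerivAt (fun x => ψ x p.2) (g p) p.1 := fun p hp =>
    aux_slice1 F p (hFdiff p hp)
  have hpd1 : ∀ p ∈ U, pd1 ψ p.1 p.2 = g p := fun p hp => (hs1 p hp).deriv
  have hpd2 : ∀ p ∈ U, fderiv ℝ F p (0, 1) = 0 := by
    intro p hp
    rw [← (aux_slice2 F p (hFdiff p hp)).deriv]
    exact hz p hp
  have hmem : ∀ p ∈ U, ∀ᶠ x in nhds p.1, (x, p.2) ∈ U := by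
    intro p hp
    have hcont : ContinuousAt (fun x : ℝ => ((x, p.2) : ℝ × ℝ)) p.1 :=
      (continuous_id.prodMk continuous_const).continuousAt
    have hUp : U ∈ nhds ((p.1, p.2) : ℝ × ℝ) := by
      rw [Prod.mk.eta]; exact hU.mem_nhds hp
    exact hcont hUp
  have hγψ : ∀ p ∈ U, pd1 γ p.1 p.2 = 2 * g p := by
    intro p hp
    have hev : (fun x => γ x p.2) =ᶠ[nhds p.1] (fun x => 2 * ψ x p.2 + c) := by
      filter_upwards [hmem p hp] with x hx
      have := hc (x, p.2) hx
      simp only at this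
      linarith
    have h2 : HasDerivAt (fun x => 2 * ψ x p.2 + c) (2 * g p) p.1 :=
      ((hs1 p hp).const_mul 2).add_const c
    rw [pd1, hev.deriv_eq, h2.deriv]
  have hfact : ∀ p ∈ U, g p * (p.1 * g p - 2) = 0 := by
    intro p hp
    have hv := hvac p hp
    rw [hz p hp, hpd1 p hp, hγψ p hp] at hv
    nlinarith [hv]
  have hval : ∀ p ∈ U, p.1 * g p = 0 ∨ p.1 * g p = 2 := by
    intro p hp
    rcases mul_eq_zero.mp (hfact p hp) with h | h
    · exact Or.inl (by rw [h, mul_zero])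
    · exact Or.inr (by linarith)
  have hgcont : ContinuousOn g U := by
    have := hψ.continuousOn_fderiv_of_isOpen hU le_rfl
    exact (ContinuousLinearMap.apply ℝ ℝ ((1 : ℝ), (0 : ℝ))).continuous.comp_continuousOn this
  have hhcont : ContinuousOn (fun p : ℝ × ℝ => p.1 * g p) U :=
    (continuous_fst.continuousOn).mul hgcont
  have hopen : ∀ (v : ℝ), v = 0 ∨ v = 2 →
      IsOpen {r : ℝ × ℝ | r ∈ U ∧ r.1 * g r = v} := by
    intro v _
    rw [isOpen_iff_mem_nhds]
    intro r hr
    have hca : ContinuousAt (fun p : ℝ × ℝ => p.1 * g p) r :=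
      hhcont.continuousAt (hU.mem_nhds hr.1)
    have hev : ∀ᶠ s in nhds r, |s.1 * g s - v| < 1 := by
      have hcab : ContinuousAt (fun p : ℝ × ℝ => |p.1 * g p - v|) r :=
        (hca.sub continuousAt_const).abs
      have h0 : |r.1 * g r - v| < 1 := by rw [hr.2]; simp
      exact hcab.eventually_lt continuousAt_const h0
    have hvv : v = 0 ∨ v = 2 := by
      rcases hval r hr.1 with h | h
      · exact Or.inl (hr.2.symm.trans h)
      · exact Or.inr (hr.2.symm.trans h)
    filter_upwards [hev, hU.mem_nhds hr.1] with s hs hsU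
    refine ⟨hsU, ?_⟩
    rcases hval s hsU with h | h <;> rcases hvv with hv | hv <;>
      rw [h, hv] at hs ⊢ <;> norm_num at hs
  have hdich : (∀ p ∈ U, g p = 0) ∨ (∀ p ∈ U, p.1 * g p = 2) := by
    by_cases hex : ∃ q ∈ U, g q ≠ 0
    · right
      obtain ⟨q, hq, hqne⟩ := hex
      have hq2 : q.1 * g q = 2 := by
        rcases hval q hq with h | h
        · exact absurd (by
            have := mul_eq_zero.mp h
            rcases this with h' | h'
            · exact absurd h' (hUsub q hq).ne'
            · exact h') hqne
        · exact h
      by_contra hnot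
      push_neg at hnot
      obtain ⟨p, hp, hpne⟩ := hnot
      have hp0 : p.1 * g p = 0 := (hval p hp).resolve_right hpne
      obtain ⟨r, -, ⟨-, hr1⟩, ⟨-, hr2⟩⟩ := hconn.isPreconnected
        {r : ℝ × ℝ | r ∈ U ∧ r.1 * g r = 0} {r : ℝ × ℝ | r ∈ U ∧ r.1 * g r = 2}
        (hopen 0 (Or.inl rfl)) (hopen 2 (Or.inr rfl))
        (fun s hs => by rcases hval s hs with h | h
                        · exact Or.inl ⟨hs, h⟩
                        · exact Or.inr ⟨hs, h⟩)
        ⟨p, hp, hp, hp0⟩ ⟨q, hq, hq, hq2⟩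
      exact absurd (hr1.symm.trans hr2) (by norm_num)
    · left
      push_neg at hex
      exact hex
  rcases hdich with hzero | htwo
  · -- ψ constant
    left
    have hfz : ∀ p ∈ U, fderiv ℝ F p = 0 := fun p hp =>
      aux_fderiv_zero F p (hzero p hp) (hpd2 p hp)
    have := aux_const_on U hU hconn.isPreconnected F hFdiff hfz
    exact ⟨F p₀, fun p hp => this p hp p₀ hp₀⟩
  · -- ψ = 2 log ρ + d₁
    right
    set G : ℝ × ℝ → ℝ := fun q => ψ q.1 q.2 - 2 * Real.log q.1 with hG
    have hGdiff : ∀ p ∈ U, DifferentiableAt ℝ G p := by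
      intro p hp
      exact (hFdiff p hp).sub
        (((Real.differentiableAt_log (hUsub p hp).ne').comp p differentiableAt_fst).const_mul 2)
    have hGfz : ∀ p ∈ U, fderiv ℝ G p = 0 := by
      intro p hp
      have hpne : p.1 ≠ 0 := (hUsub p hp).ne'
      apply aux_fderiv_zero
      · have hd : HasDerivAt (fun x => ψ x p.2 - 2 * Real.log x)
            (g p - 2 * p.1⁻¹) p.1 :=
          (hs1 p hp).sub ((Real.hasDerivAt_log hpne).const_mul 2)
        have hu := (aux_slice1 G p (hGdiff p hp)).unique hd
        rw [hu]
        have h2 := htwo p hp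
        field_simp
        linarith
      · have hd : HasDerivAt (fun y => ψ p.1 y - 2 * Real.log p.1)
            (fderiv ℝ F p (0, 1)) p.2 :=
          (aux_slice2 F p (hFdiff p hp)).sub_const _
        have hu := (aux_slice2 G p (hGdiff p hp)).unique hd
        rw [hu]
        exact hpd2 p hp
    have hGconst := aux_const_on U hU hconn.isPreconnected G hGdiff hGfz
    refine ⟨G p₀, 2 * G p₀ + c, fun p hp => ?_⟩
    have h1 : ψ p.1 p.2 - 2 * Real.log p.1 = G p₀ := hGconst p hp p₀ hp₀
    have h2 := hc p hp
    constructor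
    · linarith
    · linarith
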